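/- Let H be a fixed finite graph with at least one edge and no isolated vertices, and define m(H) := max over nonempty subgraphs Γ ⊆ H (nonempty subsets of edges, V(Γ) the set of their endpoints) of |E(Γ)|/|V(Γ)|. Let p = p(n) and d = d(n) be sequences satisfying p(n)·(n/(d(n)+1))^{1/m(H)} → ∞ as n → ∞. Then for any sequence of d(n)-dependent random graph distributions G ~ G_{n,p(n),d(n)} on n vertices, the probability that G contains a copy of H tends to 1 as n → ∞. -/

import Mathlib

open MeasureTheory ProbabilityTheory Filter
open scoped ENNReal

set_option linter.unusedSectionVars false
set_option linter.unusedVariables false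
set_option maxHeartbeats 1000000

abbrev EdgeIdx (n : ℕ) := {e : Sym2 (Fin n) // ¬ e.IsDiag}

structure DepRandomGraph (n : ℕ) (p : ℝ) (d : ℕ) where
  Ω : Type
  m : MeasurableSpace Ω
  μ : @MeasureTheory.Measure Ω m
  isProb : @MeasureTheory.IsProbabilityMeasure Ω m μ
  X : EdgeIdx n → Ω → Bool
  meas : ∀ e, @Measurable Ω Bool m ⊤ (X e)
  probX : ∀ e, μ {ω | X e ω = true} = ENNReal.ofReal p
  D : SimpleGraph (EdgeIdx n)
  degBound : ∀ e, (D.neighborSet e).ncard ≤ d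
  indep : ∀ e, @ProbabilityTheory.Indep Ω
      (MeasurableSpace.comap (X e) ⊤)
      (⨆ f ∈ {f : EdgeIdx n | f ≠ e ∧ ¬ D.Adj e f}, MeasurableSpace.comap (X f) ⊤)
      m μ

attribute [instance] DepRandomGraph.m DepRandomGraph.isProb

def DepRandomGraph.graph {n : ℕ} {p : ℝ} {d : ℕ} (G : DepRandomGraph n p d) (ω : G.Ω) :
    SimpleGraph (Fin n) :=
  SimpleGraph.fromEdgeSet {e : Sym2 (Fin n) | ∃ h : ¬ e.IsDiag, G.X ⟨e, h⟩ ω = true}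

noncomputable def DepRandomGraph.deg {n : ℕ} {p : ℝ} {d : ℕ} (G : DepRandomGraph n p d)
    (ω : G.Ω) (v : Fin n) : ℕ :=
  {u | (G.graph ω).Adj v u}.ncard

noncomputable def DepRandomGraph.eAB {n : ℕ} {p : ℝ} {d : ℕ} (G : DepRandomGraph n p d)
    (ω : G.Ω) (A B : Finset (Fin n)) : ℕ :=
  {q : Fin n × Fin n | q.1 ∈ A ∧ q.2 ∈ B ∧ (G.graph ω).Adj q.1 q.2}.ncard

def ContainsCopy {n : ℕ} {α : Type*} (G' : SimpleGraph (Fin n)) (H : SimpleGraph α) : Prop :=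
  ∃ f : α → Fin n, Function.Injective f ∧ ∀ u v, H.Adj u v → G'.Adj (f u) (f v)

/-- The number of vertices covered by a finite set of edges. -/
noncomputable def edgeVertCount {α : Type*} (Γ : Finset (Sym2 α)) : ℕ :=
  {v : α | ∃ e ∈ Γ, v ∈ e}.ncard

/-- The edge cover number of a finite set of edges: the minimum size of a subset `A ⊆ Γ`
such that every edge of `Γ` shares an endpoint with some edge of `A`. -/
noncomputable def coverNum {α : Type*} (Γ : Finset (Sym2 α)) : ℕ :=
  sInf {k : ℕ | ∃ A ⊆ Γ, A.card = k ∧ ∀ e ∈ Γ, ∃ a ∈ A, ∃ v : α, v ∈ e ∧ v ∈ a}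

open scoped Classical

namespace SCT

open Finset

/-- Chung–Erdős / second moment inequality -/
lemma chung_erdos {Ω : Type*} [MeasurableSpace Ω] (μ : Measure Ω) {ι : Type*}
    (I : Finset ι) (A : ι → Set Ω) (hA : ∀ i ∈ I, MeasurableSet (A i)) :
    (∑ i ∈ I, μ (A i)) ^ 2 ≤ μ (⋃ i ∈ (I : Set ι), A i) * ∑ i ∈ I, ∑ j ∈ I, μ (A i ∩ A j) := by
  classical
  set U : Set Ω := ⋃ i ∈ (I : Set ι), A i with hU
  have hUmeas : MeasurableSet U := MeasurableSet.biUnion (Set.to_countable _) (fun i hi => hA i hi)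
  set N : Ω → ℝ≥0∞ := fun ω => ∑ i ∈ I, (A i).indicator 1 ω with hN
  have hNmeas : Measurable N := by
    apply Finset.measurable_sum
    intro i hi
    exact (measurable_one.indicator (hA i hi))
  have hint1 : ∫⁻ ω, N ω ∂μ = ∑ i ∈ I, μ (A i) := by
    rw [hN]
    rw [lintegral_finset_sum _ (fun i hi => measurable_one.indicator (hA i hi))]
    exact Finset.sum_congr rfl (fun i hi => lintegral_indicator_one (hA i hi))
  have hint2 : ∫⁻ ω, (N ω) ^ 2 ∂μ = ∑ i ∈ I, ∑ j ∈ I, μ (A i ∩ A j) := by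
    have : ∀ ω, (N ω) ^ 2 = ∑ i ∈ I, ∑ j ∈ I, (A i ∩ A j).indicator 1 ω := by
      intro ω
      rw [hN, sq, Finset.sum_mul_sum]
      refine Finset.sum_congr rfl (fun i hi => Finset.sum_congr rfl (fun j hj => ?_))
      by_cases h1 : ω ∈ A i <;> by_cases h2 : ω ∈ A j <;>
        simp [Set.indicator, h1, h2]
    simp_rw [this]
    rw [lintegral_finset_sum _ (fun i hi => Finset.measurable_sum _
      (fun j hj => measurable_one.indicator ((hA i hi).inter (hA j hj))))]
    refine Finset.sum_congr rfl (fun i hi => ?_)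
    rw [lintegral_finset_sum _ (fun j hj => measurable_one.indicator ((hA i hi).inter (hA j hj)))]
    exact Finset.sum_congr rfl (fun j hj => lintegral_indicator_one ((hA i hi).inter (hA j hj)))
  have hpt : ∀ ω, N ω = (U.indicator (1 : Ω → ℝ≥0∞) ω) ^ ((2:ℝ)⁻¹) * ((N ω)^2) ^ ((2:ℝ)⁻¹) := by
    intro ω
    by_cases hω : ω ∈ U
    · have : U.indicator (1 : Ω → ℝ≥0∞) ω = 1 := Set.indicator_of_mem hω 1
      rw [this, ENNReal.one_rpow, one_mul, ← ENNReal.rpow_natCast (N ω) 2,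
        ← ENNReal.rpow_mul]
      norm_num
    · have h0 : N ω = 0 := by
        rw [hN]
        refine Finset.sum_eq_zero (fun i hi => ?_)
        have : ω ∈ A i → ω ∈ U := fun h => Set.mem_biUnion hi h
        have : ω ∉ A i := fun h => hω (this h)
        simp [Set.indicator, this]
      rw [h0]
      have : U.indicator (1 : Ω → ℝ≥0∞) ω = 0 := Set.indicator_of_notMem hω 1
      rw [this]
      rw [ENNReal.zero_rpow_of_pos (by norm_num)]
      simp
  have hCS : ∫⁻ ω, N ω ∂μ ≤ (∫⁻ ω, U.indicator 1 ω ∂μ) ^ ((2:ℝ)⁻¹) *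
      (∫⁻ ω, (N ω)^2 ∂μ) ^ ((2:ℝ)⁻¹) := by
    calc ∫⁻ ω, N ω ∂μ
        = ∫⁻ ω, (U.indicator (1:Ω → ℝ≥0∞) ω) ^ ((2:ℝ)⁻¹) * ((N ω)^2) ^ ((2:ℝ)⁻¹) ∂μ := by
          exact lintegral_congr hpt
      _ ≤ _ := by
          refine ENNReal.lintegral_mul_norm_pow_le ?_ ?_ (by norm_num) (by norm_num) (by norm_num)
          · exact (measurable_one.indicator hUmeas).aemeasurable
          · exact (hNmeas.pow_const 2).aemeasurable
  have hindint : ∫⁻ ω, U.indicator (1:Ω → ℝ≥0∞) ω ∂μ = μ U := lintegral_indicator_one hUmeas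
  rw [hindint, hint1, hint2] at hCS
  calc (∑ i ∈ I, μ (A i)) ^ 2
      ≤ ((μ U) ^ ((2:ℝ)⁻¹) * (∑ i ∈ I, ∑ j ∈ I, μ (A i ∩ A j)) ^ ((2:ℝ)⁻¹)) ^ 2 := by
        exact pow_le_pow_left' hCS 2
    _ = μ U * ∑ i ∈ I, ∑ j ∈ I, μ (A i ∩ A j) := by
        rw [mul_pow, ← ENNReal.rpow_natCast ((μ U) ^ ((2:ℝ)⁻¹)) 2,
          ← ENNReal.rpow_natCast ((∑ i ∈ I, ∑ j ∈ I, μ (A i ∩ A j)) ^ ((2:ℝ)⁻¹)) 2,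
          ← ENNReal.rpow_mul, ← ENNReal.rpow_mul]
        norm_num

variable {α : Type} [Fintype α] [DecidableEq α] (H : SimpleGraph α) [Fintype H.edgeSet]
variable {n : ℕ} {pp : ℝ} {dd : ℕ}

/-- the slot of an edge under an embedding -/
def slot (f : α ↪ Fin n) (e : {x // x ∈ H.edgeFinset}) : EdgeIdx n :=
  ⟨Sym2.map f e.1, by
    rw [Sym2.isDiag_map f.injective]
    exact SimpleGraph.not_isDiag_of_mem_edgeFinset e.2⟩

lemma slot_injective (f : α ↪ Fin n) : Function.Injective (slot H f) := by
  intro a b hab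
  apply Subtype.ext
  exact (Sym2.map.injective f.injective) (congrArg Subtype.val hab)

def slots (f : α ↪ Fin n) : Finset (EdgeIdx n) := H.edgeFinset.attach.image (slot H f)

lemma card_slots (f : α ↪ Fin n) : (slots H f).card = H.edgeFinset.card := by
  rw [slots, Finset.card_image_of_injective _ (slot_injective H f), Finset.card_attach]

noncomputable def nbr (G : DepRandomGraph n pp dd) (s : EdgeIdx n) : Finset (EdgeIdx n) :=
  (G.D.neighborSet s).toFinset

lemma card_nbr (G : DepRandomGraph n pp dd) (s : EdgeIdx n) : (nbr G s).card ≤ dd := by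
  rw [nbr, ← Set.ncard_eq_toFinset_card']
  exact G.degBound s

lemma mem_nbr {G : DepRandomGraph n pp dd} {s t : EdgeIdx n} :
    t ∈ nbr G s ↔ G.D.Adj s t := by rw [nbr, Set.mem_toFinset, SimpleGraph.mem_neighborSet]

noncomputable def closure (G : DepRandomGraph n pp dd) (f : α ↪ Fin n) : Finset (EdgeIdx n) :=
  slots H f ∪ (slots H f).biUnion (nbr G)

lemma slots_subset_closure (G : DepRandomGraph n pp dd) (f : α ↪ Fin n) :
    slots H f ⊆ closure H G f := Finset.subset_union_left

lemma card_closure (G : DepRandomGraph n pp dd) (f : α ↪ Fin n) :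
    (closure H G f).card ≤ H.edgeFinset.card * (dd + 1) := by
  calc (closure H G f).card ≤ (slots H f).card + ((slots H f).biUnion (nbr G)).card :=
        Finset.card_union_le _ _
    _ ≤ (slots H f).card + ∑ s ∈ slots H f, (nbr G s).card :=
        Nat.add_le_add_left (Finset.card_biUnion_le) _
    _ ≤ H.edgeFinset.card + ∑ s ∈ slots H f, dd := by
        rw [card_slots]
        exact Nat.add_le_add_left (Finset.sum_le_sum (fun s _ => card_nbr G s)) _
    _ ≤ H.edgeFinset.card + H.edgeFinset.card * dd := by
        rw [Finset.sum_const, card_slots, smul_eq_mul]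
    _ = H.edgeFinset.card * (dd + 1) := by ring

def ends (s : EdgeIdx n) : Finset (Fin n) := Finset.univ.filter (· ∈ s.1)

lemma mem_ends {x : Fin n} {s : EdgeIdx n} : x ∈ ends s ↔ x ∈ s.1 := by
  simp [ends]

lemma card_ends (s : EdgeIdx n) : (ends s).card ≤ 2 := by
  obtain ⟨e, he⟩ := s
  induction e using Sym2.ind with
  | _ x y =>
    have hsub : ends (⟨s(x,y), he⟩ : EdgeIdx n) ⊆ {x, y} := by
      intro a ha
      rw [mem_ends] at ha
      simp only [Sym2.mem_iff] at ha
      simp [ha]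
    calc (ends (⟨s(x,y), he⟩ : EdgeIdx n)).card ≤ ({x,y} : Finset (Fin n)).card :=
          Finset.card_le_card hsub
      _ ≤ 2 := Finset.card_insert_le _ _ |>.trans (by simp)

noncomputable def Pf (G : DepRandomGraph n pp dd) (f : α ↪ Fin n) : Finset (Fin n) :=
  (closure H G f).biUnion ends

lemma card_Pf (G : DepRandomGraph n pp dd) (f : α ↪ Fin n) :
    (Pf H G f).card ≤ 2 * (H.edgeFinset.card * (dd + 1)) := by
  calc (Pf H G f).card ≤ ∑ s ∈ closure H G f, (ends s).card := Finset.card_biUnion_le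
    _ ≤ ∑ s ∈ closure H G f, 2 := Finset.sum_le_sum (fun s _ => card_ends s)
    _ = (closure H G f).card * 2 := by rw [Finset.sum_const, smul_eq_mul]
    _ ≤ (H.edgeFinset.card * (dd+1)) * 2 := Nat.mul_le_mul_right _ (card_closure H G f)
    _ = 2 * (H.edgeFinset.card * (dd + 1)) := by ring

def goodF (G : DepRandomGraph n pp dd) (f : α ↪ Fin n) : Prop :=
  ∀ s ∈ slots H f, ∀ t ∈ slots H f, s ≠ t → ¬ G.D.Adj s t

noncomputable def Good (G : DepRandomGraph n pp dd) : Finset (α ↪ Fin n) :=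
  Finset.univ.filter (goodF H G)

def EV (G : DepRandomGraph n pp dd) (S : Finset (EdgeIdx n)) : Set G.Ω :=
  {ω | ∀ s ∈ S, G.X s ω = true}

lemma EV_measurable (G : DepRandomGraph n pp dd) (S : Finset (EdgeIdx n)) :
    MeasurableSet (EV G S) := by
  have : EV G S = ⋂ s ∈ (S : Set (EdgeIdx n)), (G.X s) ⁻¹' {true} := by
    ext ω; simp [EV]
  rw [this]
  exact MeasurableSet.biInter (Set.to_countable _)
    (fun s _ => (G.meas s) (by trivial))

lemma meas_EV (G : DepRandomGraph n pp dd) (S : Finset (EdgeIdx n))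
    (hS : ∀ s ∈ S, ∀ t ∈ S, s ≠ t → ¬ G.D.Adj s t) :
    G.μ (EV G S) = (ENNReal.ofReal pp) ^ S.card := by
  classical
  induction S using Finset.induction_on with
  | empty =>
    have : EV G ∅ = Set.univ := by ext ω; simp [EV]
    simp [this]
  | @insert s S hs ih =>
    have hsplit : EV G (insert s S) = (G.X s ⁻¹' {true}) ∩ EV G S := by
      ext ω; simp [EV]
    have hA : MeasurableSet[MeasurableSpace.comap (G.X s) ⊤] (G.X s ⁻¹' {true}) :=
      ⟨{true}, trivial, rfl⟩
    have hB : MeasurableSet[⨆ f ∈ {f : EdgeIdx n | f ≠ s ∧ ¬ G.D.Adj s f},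
        MeasurableSpace.comap (G.X f) ⊤] (EV G S) := by
      have : EV G S = ⋂ t ∈ (S : Set (EdgeIdx n)), (G.X t) ⁻¹' {true} := by
        ext ω; simp [EV]
      rw [this]
      refine MeasurableSet.biInter (Set.to_countable _) (fun t ht => ?_)
      have hts : t ≠ s := fun h => hs (h ▸ ht)
      have hadj : ¬ G.D.Adj s t := hS s (Finset.mem_insert_self _ _) t
        (Finset.mem_insert_of_mem ht) (Ne.symm hts)
      have hle : MeasurableSpace.comap (G.X t) ⊤ ≤
          ⨆ f ∈ {f : EdgeIdx n | f ≠ s ∧ ¬ G.D.Adj s f}, MeasurableSpace.comap (G.X f) ⊤ := by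
        refine le_iSup₂ (f := fun (f : EdgeIdx n) (_ : f ∈ {f : EdgeIdx n | f ≠ s ∧ ¬ G.D.Adj s f})
          => MeasurableSpace.comap (G.X f) ⊤) t ⟨hts, hadj⟩
      exact hle _ ⟨{true}, trivial, rfl⟩
    have hmul : G.μ ((G.X s ⁻¹' {true}) ∩ EV G S) =
        G.μ (G.X s ⁻¹' {true}) * G.μ (EV G S) :=
      (ProbabilityTheory.Indep_iff _ _ _).1 (G.indep s) _ _ hA hB
    have hx : G.μ (G.X s ⁻¹' {true}) = ENNReal.ofReal pp := G.probX s
    have hIH : G.μ (EV G S) = (ENNReal.ofReal pp) ^ S.card :=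
      ih (fun a ha b hb hab => hS a (Finset.mem_insert_of_mem ha) b (Finset.mem_insert_of_mem hb) hab)
    rw [hsplit, hmul, hx, hIH, Finset.card_insert_of_notMem hs, pow_succ]
    ring

lemma EV_inter (G : DepRandomGraph n pp dd) (S T : Finset (EdgeIdx n)) :
    EV G S ∩ EV G T = EV G (S ∪ T) := by
  ext ω; constructor
  · rintro ⟨h1, h2⟩ s hs
    rcases Finset.mem_union.mp hs with h | h
    exacts [h1 s h, h2 s h]
  · intro h
    exact ⟨fun s hs => h s (Finset.mem_union_left _ hs),
           fun s hs => h s (Finset.mem_union_right _ hs)⟩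

lemma EV_mono (G : DepRandomGraph n pp dd) {S T : Finset (EdgeIdx n)} (h : S ⊆ T) :
    EV G T ⊆ EV G S := fun ω hω s hs => hω s (h hs)

lemma contains_of_EV (G : DepRandomGraph n pp dd) (f : α ↪ Fin n) {ω : G.Ω}
    (hω : ω ∈ EV G (slots H f)) : ContainsCopy (G.graph ω) H := by
  refine ⟨f, f.injective, fun u v huv => ?_⟩
  rw [DepRandomGraph.graph, SimpleGraph.fromEdgeSet_adj]
  have hne : f u ≠ f v := fun h => (H.ne_of_adj huv) (f.injective h)
  refine ⟨?_, hne⟩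
  have hmem : s(u,v) ∈ H.edgeFinset := by
    rw [SimpleGraph.mem_edgeFinset]; exact huv
  have hnd : ¬ (s(f u, f v) : Sym2 (Fin n)).IsDiag := by
    rw [Sym2.mk_isDiag_iff]; exact hne
  refine ⟨hnd, ?_⟩
  have hS := hω (slot H f ⟨s(u,v), hmem⟩)
    (Finset.mem_image_of_mem _ (Finset.mem_attach _ ⟨s(u,v), hmem⟩))
  have hval : (slot H f ⟨s(u,v), hmem⟩) = ⟨s(f u, f v), hnd⟩ := by
    apply Subtype.ext
    simp [slot, Sym2.map_pair_eq]
  rwa [hval] at hS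

/-- covered vertices -/
def VG (Γ : Finset {x // x ∈ H.edgeFinset}) : Finset α :=
  Finset.univ.filter (fun a => ∃ e ∈ Γ, a ∈ e.1)

lemma VG_card_le (Γ : Finset {x // x ∈ H.edgeFinset}) : (VG H Γ).card ≤ Fintype.card α := by
  unfold VG
  exact (Finset.card_filter_le _ _).trans_eq Finset.card_univ

/-- the counting lemma -/
lemma count_constrained (G : DepRandomGraph n pp dd) (f : α ↪ Fin n)
    (Γ : Finset {x // x ∈ H.edgeFinset}) (hΓ : Γ.Nonempty) :
    ((Finset.univ : Finset (α ↪ Fin n)).filter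
        (fun g => ∀ e ∈ Γ, slot H g e ∈ closure H G f)).card ≤
      (Pf H G f).card ^ (VG H Γ).card * n ^ (Fintype.card α - (VG H Γ).card) := by
  classical
  set C := (Finset.univ : Finset (α ↪ Fin n)).filter
      (fun g => ∀ e ∈ Γ, slot H g e ∈ closure H G f) with hC
  have hmemP : ∀ g ∈ C, ∀ a ∈ VG H Γ, (g : α ↪ Fin n) a ∈ Pf H G f := by
    intro g hg a ha
    rw [VG, Finset.mem_filter] at ha
    obtain ⟨e, heΓ, hae⟩ := ha.2
    have hslot : slot H g e ∈ closure H G f := (Finset.mem_filter.mp hg).2 e heΓ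
    refine Finset.mem_biUnion.mpr ⟨slot H g e, hslot, ?_⟩
    rw [mem_ends]
    exact Sym2.mem_map.mpr ⟨a, hae, rfl⟩
  rcases Finset.eq_empty_or_nonempty C with hCe | ⟨g₀, hg₀⟩
  · simp [hCe]
  have hy₀ : ∃ y, y ∈ Pf H G f := by
    obtain ⟨e₀, he₀⟩ := hΓ
    obtain ⟨x, hx⟩ : ∃ x, x ∈ e₀.1 := ⟨(e₀.1.out).1, Sym2.out_fst_mem e₀.1⟩
    exact ⟨g₀ x, hmemP g₀ hg₀ x (Finset.mem_filter.mpr ⟨Finset.mem_univ _, ⟨e₀, he₀, hx⟩⟩)⟩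
  obtain ⟨y₀, hy₀⟩ := hy₀
  have hcard : C.card ≤ Fintype.card
      (({a // a ∈ VG H Γ} → {y // y ∈ Pf H G f}) × ({a : α // a ∉ VG H Γ} → Fin n)) := by
    rw [← Finset.card_univ]
    refine Finset.card_le_card_of_injOn (fun g =>
      ((fun a => if h : (g : α ↪ Fin n) a.1 ∈ Pf H G f then ⟨(g : α ↪ Fin n) a.1, h⟩
          else (⟨y₀, hy₀⟩ : {y // y ∈ Pf H G f})),
       (fun a => (g : α ↪ Fin n) a.1)))
      (fun g hg => Finset.mem_univ _) ?_
    intro g hg g' hg' heq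
    obtain ⟨h1, h2⟩ := Prod.ext_iff.mp heq
    have : ∀ a : α, (g : α ↪ Fin n) a = (g' : α ↪ Fin n) a := by
      intro a
      by_cases ha : a ∈ VG H Γ
      · have hma : (g : α ↪ Fin n) a ∈ Pf H G f := hmemP g hg a ha
        have hma' : (g' : α ↪ Fin n) a ∈ Pf H G f := hmemP g' hg' a ha
        have := congrFun h1 ⟨a, ha⟩
        simp only [dif_pos hma, dif_pos hma', Subtype.mk.injEq] at this
        exact this
      · exact congrFun h2 ⟨a, ha⟩
    exact DFunLike.coe_injective (funext this)
  calc C.card ≤ _ := hcard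
    _ = (Pf H G f).card ^ (VG H Γ).card * n ^ (Fintype.card α - (VG H Γ).card) := by
        rw [Fintype.card_prod, Fintype.card_fun, Fintype.card_fun, Fintype.card_coe,
          Fintype.card_coe, Fintype.card_subtype_compl, Fintype.card_coe, Fintype.card_fin]

/-- pair bound -/
lemma pair_bound (G : DepRandomGraph n pp dd) (f g : α ↪ Fin n)
    (hf : goodF H G f) (hg : goodF H G g) :
    G.μ (EV G (slots H f) ∩ EV G (slots H g)) ≤
      (ENNReal.ofReal pp) ^ (2 * H.edgeFinset.card -
        (H.edgeFinset.attach.filter (fun e => slot H g e ∈ closure H G f)).card) := by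
  classical
  set c := (H.edgeFinset.attach.filter (fun e => slot H g e ∈ closure H G f)).card with hc
  set T : Finset (EdgeIdx n) := slots H f ∪ (slots H g \ closure H G f) with hT
  have hsub : T ⊆ slots H f ∪ slots H g :=
    Finset.union_subset_union Finset.Subset.rfl (Finset.sdiff_subset)
  have hmono : EV G (slots H f) ∩ EV G (slots H g) ⊆ EV G T := by
    rw [EV_inter]; exact EV_mono G hsub
  have hTind : ∀ s ∈ T, ∀ t ∈ T, s ≠ t → ¬ G.D.Adj s t := by
    intro s hs t ht hne
    rcases Finset.mem_union.mp hs with hsf | hsg <;> rcases Finset.mem_union.mp ht with htf | htg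
    · exact hf s hsf t htf hne
    · intro hadj
      have h1 : t ∈ nbr G s := mem_nbr.mpr hadj
      have h2 : t ∈ closure H G f :=
        Finset.mem_union_right _ (Finset.mem_biUnion.mpr ⟨s, hsf, h1⟩)
      exact (Finset.mem_sdiff.mp htg).2 h2
    · intro hadj
      have h1 : s ∈ nbr G t := mem_nbr.mpr hadj.symm
      have h2 : s ∈ closure H G f :=
        Finset.mem_union_right _ (Finset.mem_biUnion.mpr ⟨t, htf, h1⟩)
      exact (Finset.mem_sdiff.mp hsg).2 h2
    · exact hg s (Finset.mem_sdiff.mp hsg).1 t (Finset.mem_sdiff.mp htg).1 hne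
  have hcE : c ≤ H.edgeFinset.card := by
    calc c ≤ H.edgeFinset.attach.card := Finset.card_filter_le _ _
      _ = H.edgeFinset.card := Finset.card_attach
  have hsd : slots H g \ closure H G f =
      (H.edgeFinset.attach.filter (fun e => slot H g e ∉ closure H G f)).image (slot H g) := by
    ext s
    constructor
    · intro hs
      obtain ⟨hs1, hs2⟩ := Finset.mem_sdiff.mp hs
      obtain ⟨e, he, rfl⟩ := Finset.mem_image.mp hs1
      exact Finset.mem_image.mpr ⟨e, Finset.mem_filter.mpr ⟨he, hs2⟩, rfl⟩
    · intro hs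
      obtain ⟨e, he, rfl⟩ := Finset.mem_image.mp hs
      obtain ⟨he1, he2⟩ := Finset.mem_filter.mp he
      exact Finset.mem_sdiff.mpr ⟨Finset.mem_image_of_mem _ he1, he2⟩
  have hdisj : Disjoint (slots H f) (slots H g \ closure H G f) :=
    Finset.disjoint_left.mpr
      (fun a haf hag => (Finset.mem_sdiff.mp hag).2 (slots_subset_closure H G f haf))
  have hcardT : T.card = 2 * H.edgeFinset.card - c := by
    rw [hT, Finset.card_union_of_disjoint hdisj, card_slots, hsd,
      Finset.card_image_of_injective _ (slot_injective H g)]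
    have := Finset.card_filter_add_card_filter_not
      (s := H.edgeFinset.attach) (p := fun e => slot H g e ∈ closure H G f)
    rw [Finset.card_attach] at this
    omega
  calc G.μ (EV G (slots H f) ∩ EV G (slots H g)) ≤ G.μ (EV G T) := measure_mono hmono
    _ = (ENNReal.ofReal pp) ^ T.card := meas_EV G T hTind
    _ = _ := by rw [hcardT]


/-- uniform upper bound for the correction sum -/
noncomputable def KK (G : DepRandomGraph n pp dd) : ℝ≥0∞ :=
  ∑ Γ ∈ (H.edgeFinset.attach.powerset).erase ∅,
    (ENNReal.ofReal pp) ^ (2 * H.edgeFinset.card - Γ.card) *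
      (((2 * (H.edgeFinset.card * (dd+1))) ^ ((VG H Γ).card) *
        n ^ (Fintype.card α - (VG H Γ).card) : ℕ) : ℝ≥0∞)

lemma sum_pair_le (G : DepRandomGraph n pp dd) (f : α ↪ Fin n) (hf : goodF H G f) :
    ∑ g ∈ Good H G, G.μ (EV G (slots H f) ∩ EV G (slots H g)) ≤
      ((Good H G).card : ℝ≥0∞) * (ENNReal.ofReal pp) ^ (2 * H.edgeFinset.card) + KK H G := by
  classical
  set x := ENNReal.ofReal pp with hx
  set E := H.edgeFinset.card with hE
  set Q : (α ↪ Fin n) → Finset {e // e ∈ H.edgeFinset} :=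
    fun g => H.edgeFinset.attach.filter (fun e => slot H g e ∈ closure H G f) with hQ
  have step1 : ∑ g ∈ Good H G, G.μ (EV G (slots H f) ∩ EV G (slots H g)) ≤
      ∑ g ∈ Good H G, x ^ (2 * E - (Q g).card) := by
    refine Finset.sum_le_sum (fun g hg => ?_)
    exact pair_bound H G f g hf ((Finset.mem_filter.mp hg).2)
  have step2 : ∑ g ∈ Good H G, x ^ (2 * E - (Q g).card) =
      ∑ Γ ∈ H.edgeFinset.attach.powerset,
        ∑ g ∈ (Good H G).filter (fun g => Q g = Γ), x ^ (2 * E - (Q g).card) :=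
    (Finset.sum_fiberwise_of_maps_to
      (fun g _ => Finset.mem_powerset.mpr (Finset.filter_subset _ _)) _).symm
  have step3 : ∀ Γ ∈ H.edgeFinset.attach.powerset,
      ∑ g ∈ (Good H G).filter (fun g => Q g = Γ), x ^ (2 * E - (Q g).card) =
      (((Good H G).filter (fun g => Q g = Γ)).card : ℝ≥0∞) * x ^ (2 * E - Γ.card) := by
    intro Γ hΓ
    rw [Finset.sum_congr rfl (fun g hg => ?_), Finset.sum_const, nsmul_eq_mul]
    rw [(Finset.mem_filter.mp hg).2]
  have hemptyfiber : (((Good H G).filter (fun g => Q g = (∅ : Finset {e // e ∈ H.edgeFinset}))).card : ℝ≥0∞) * x ^ (2 * E - (0:ℕ)) ≤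
      ((Good H G).card : ℝ≥0∞) * x ^ (2 * E) := by
    rw [Nat.sub_zero]
    exact mul_le_mul_left (by exact_mod_cast Nat.cast_le.mpr (Finset.card_filter_le _ _)) _
  have hgenfiber : ∀ Γ ∈ (H.edgeFinset.attach.powerset).erase ∅,
      (((Good H G).filter (fun g => Q g = Γ)).card : ℝ≥0∞) * x ^ (2 * E - Γ.card) ≤
      x ^ (2 * E - Γ.card) *
        (((2 * (E * (dd+1))) ^ ((VG H Γ).card) * n ^ (Fintype.card α - (VG H Γ).card) : ℕ) : ℝ≥0∞) := by
    intro Γ hΓ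
    obtain ⟨hne, hsub⟩ := Finset.mem_erase.mp hΓ
    have hΓne : Γ.Nonempty := Finset.nonempty_iff_ne_empty.mpr hne
    have hfibsub : (Good H G).filter (fun g => Q g = Γ) ⊆
        (Finset.univ : Finset (α ↪ Fin n)).filter
          (fun g => ∀ e ∈ Γ, slot H g e ∈ closure H G f) := by
      intro g hg
      obtain ⟨hg1, hg2⟩ := Finset.mem_filter.mp hg
      refine Finset.mem_filter.mpr ⟨Finset.mem_univ _, fun e he => ?_⟩
      have : e ∈ Q g := hg2 ▸ he
      exact (Finset.mem_filter.mp this).2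
    have hcount := count_constrained H G f Γ hΓne
    have hPf : (Pf H G f).card ^ (VG H Γ).card * n ^ (Fintype.card α - (VG H Γ).card) ≤
        (2 * (E * (dd+1))) ^ ((VG H Γ).card) * n ^ (Fintype.card α - (VG H Γ).card) :=
      Nat.mul_le_mul_right _ (Nat.pow_le_pow_left (card_Pf H G f) _)
    rw [mul_comm]
    refine mul_le_mul_right ?_ _
    exact_mod_cast le_trans (Nat.cast_le.mpr (le_trans
      (Nat.cast_le.mpr (Finset.card_le_card hfibsub) : _) (le_trans hcount hPf)))
      (le_refl _)
  calc ∑ g ∈ Good H G, G.μ (EV G (slots H f) ∩ EV G (slots H g))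
      ≤ ∑ g ∈ Good H G, x ^ (2 * E - (Q g).card) := step1
    _ = ∑ Γ ∈ H.edgeFinset.attach.powerset,
        ∑ g ∈ (Good H G).filter (fun g => Q g = Γ), x ^ (2 * E - (Q g).card) := step2
    _ = ∑ Γ ∈ H.edgeFinset.attach.powerset,
        (((Good H G).filter (fun g => Q g = Γ)).card : ℝ≥0∞) * x ^ (2 * E - Γ.card) :=
        Finset.sum_congr rfl step3
    _ = (((Good H G).filter (fun g => Q g = (∅ : Finset {e // e ∈ H.edgeFinset}))).card : ℝ≥0∞) * x ^ (2 * E - (0:ℕ)) +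
        ∑ Γ ∈ (H.edgeFinset.attach.powerset).erase ∅,
          (((Good H G).filter (fun g => Q g = Γ)).card : ℝ≥0∞) * x ^ (2 * E - Γ.card) := by
        rw [← Finset.add_sum_erase _ _ (Finset.mem_powerset.mpr (Finset.empty_subset _))]
        simp
    _ ≤ ((Good H G).card : ℝ≥0∞) * x ^ (2 * E) + KK H G := by
        refine add_le_add hemptyfiber ?_
        exact Finset.sum_le_sum hgenfiber

lemma sum_first_moment (G : DepRandomGraph n pp dd) :
    ∑ f ∈ Good H G, G.μ (EV G (slots H f)) =
      ((Good H G).card : ℝ≥0∞) * (ENNReal.ofReal pp) ^ H.edgeFinset.card := by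
  rw [Finset.sum_congr rfl (fun f hf => ?_), Finset.sum_const, nsmul_eq_mul]
  rw [meas_EV G (slots H f) ((Finset.mem_filter.mp hf).2), card_slots]

lemma core (G : DepRandomGraph n pp dd) {ε : ℝ} (hε : 0 < ε) (hpp : 0 < pp)
    (hM : 0 < (Good H G).card)
    (hKb : KK H G ≤ ENNReal.ofReal ε *
      (((Good H G).card : ℝ≥0∞) * (ENNReal.ofReal pp) ^ (2 * H.edgeFinset.card))) :
    ENNReal.ofReal (1/(1+ε)) ≤ G.μ {ω | ContainsCopy (G.graph ω) H} := by
  classical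
  set x := ENNReal.ofReal pp with hx
  set E := H.edgeFinset.card with hE
  set M := (Good H G).card with hMdef
  have hCE := chung_erdos G.μ (Good H G) (fun f => EV G (slots H f))
    (fun f _ => EV_measurable G (slots H f))
  rw [sum_first_moment H G] at hCE
  have hLHS : ((M : ℝ≥0∞) * x ^ E) ^ 2 = (M:ℝ≥0∞)^2 * x^(2*E) := by
    rw [mul_pow, ← pow_mul, mul_comm E 2]
  have hsum2 : ∑ f ∈ Good H G, ∑ g ∈ Good H G, G.μ (EV G (slots H f) ∩ EV G (slots H g)) ≤
      (M:ℝ≥0∞)^2 * x^(2*E) * (1 + ENNReal.ofReal ε) := by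
    calc ∑ f ∈ Good H G, ∑ g ∈ Good H G, G.μ (EV G (slots H f) ∩ EV G (slots H g))
        ≤ ∑ f ∈ Good H G, ((M:ℝ≥0∞) * x ^ (2*E) + KK H G) := by
          refine Finset.sum_le_sum (fun f hf => sum_pair_le H G f ((Finset.mem_filter.mp hf).2))
      _ ≤ ∑ f ∈ Good H G, ((M:ℝ≥0∞) * x ^ (2*E) + ENNReal.ofReal ε * ((M:ℝ≥0∞) * x^(2*E))) := by
          exact Finset.sum_le_sum (fun f _ => add_le_add_right hKb _)
      _ = (M:ℝ≥0∞) * ((M:ℝ≥0∞) * x ^ (2*E) + ENNReal.ofReal ε * ((M:ℝ≥0∞) * x^(2*E))) := by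
          rw [Finset.sum_const, nsmul_eq_mul]
      _ = (M:ℝ≥0∞)^2 * x^(2*E) * (1 + ENNReal.ofReal ε) := by ring
  set U : Set G.Ω := ⋃ f ∈ ((Good H G) : Set (α ↪ Fin n)), EV G (slots H f) with hU
  have hCE2 : (M:ℝ≥0∞)^2 * x^(2*E) ≤ G.μ U * ((M:ℝ≥0∞)^2 * x^(2*E) * (1 + ENNReal.ofReal ε)) := by
    calc (M:ℝ≥0∞)^2 * x^(2*E) = ((M : ℝ≥0∞) * x ^ E) ^ 2 := hLHS.symm
      _ ≤ G.μ U * ∑ f ∈ Good H G, ∑ g ∈ Good H G, G.μ (EV G (slots H f) ∩ EV G (slots H g)) := hCE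
      _ ≤ G.μ U * ((M:ℝ≥0∞)^2 * x^(2*E) * (1 + ENNReal.ofReal ε)) :=
          mul_le_mul_right hsum2 _
  have hc0 : ((M:ℝ≥0∞)^2 * x^(2*E)) ≠ 0 :=
    mul_ne_zero (pow_ne_zero _ (Nat.cast_ne_zero.mpr hM.ne'))
      (pow_ne_zero _ (ENNReal.ofReal_pos.mpr hpp).ne')
  have hctop : ((M:ℝ≥0∞)^2 * x^(2*E)) ≠ ⊤ := by
    apply ENNReal.mul_ne_top
    · simp [ENNReal.pow_ne_top, ENNReal.natCast_ne_top]
    · exact ENNReal.pow_ne_top ENNReal.ofReal_ne_top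
  have hdiv : (((M:ℝ≥0∞)^2 * x^(2*E)) / (((M:ℝ≥0∞)^2 * x^(2*E)) * (1 + ENNReal.ofReal ε)))
      ≤ G.μ U := ENNReal.div_le_of_le_mul (by rw [mul_comm (G.μ U)] at hCE2 ⊢; exact hCE2)
  have heq : (((M:ℝ≥0∞)^2 * x^(2*E)) / (((M:ℝ≥0∞)^2 * x^(2*E)) * (1 + ENNReal.ofReal ε)))
      = (1 + ENNReal.ofReal ε)⁻¹ := by
    rw [ENNReal.div_eq_inv_mul, ENNReal.mul_inv (Or.inl hc0) (Or.inl hctop),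
      mul_comm (((M:ℝ≥0∞)^2 * x^(2*E))⁻¹) ((1 + ENNReal.ofReal ε)⁻¹), mul_assoc,
      ENNReal.inv_mul_cancel hc0 hctop, mul_one]
  have hofr : ENNReal.ofReal (1/(1+ε)) = (1 + ENNReal.ofReal ε)⁻¹ := by
    rw [one_div, ENNReal.ofReal_inv_of_pos (by linarith),
      ENNReal.ofReal_add (by norm_num) hε.le, ENNReal.ofReal_one]
  have hUsub : U ⊆ {ω | ContainsCopy (G.graph ω) H} := by
    intro ω hω
    obtain ⟨f, hf, hmem⟩ := Set.mem_iUnion₂.mp hω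
    exact contains_of_EV H G f hmem
  calc ENNReal.ofReal (1/(1+ε)) = (1 + ENNReal.ofReal ε)⁻¹ := hofr
    _ = _ := heq.symm
    _ ≤ G.μ U := hdiv
    _ ≤ G.μ {ω | ContainsCopy (G.graph ω) H} := measure_mono hUsub


noncomputable def BadPair (G : DepRandomGraph n pp dd) (e₁ e₂ : {x // x ∈ H.edgeFinset}) :
    Finset (α ↪ Fin n) :=
  Finset.univ.filter (fun f => G.D.Adj (slot H f e₁) (slot H f e₂))

lemma slot_eq_pair (f : α ↪ Fin n) (e : {x // x ∈ H.edgeFinset}) :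
    (slot H f e).1 = s(f e.1.out.1, f e.1.out.2) := by
  have h1 : s(e.1.out.1, e.1.out.2) = e.1 := Quot.out_eq _
  show Sym2.map f e.1 = _
  conv_lhs => rw [← h1]
  rw [Sym2.map_pair_eq]

lemma not_good_subset (G : DepRandomGraph n pp dd) :
    (Finset.univ : Finset (α ↪ Fin n)) \ Good H G ⊆
      (H.edgeFinset.attach ×ˢ H.edgeFinset.attach).biUnion
        (fun q => BadPair H G q.1 q.2) := by
  intro f hf
  rw [Finset.mem_sdiff, Good, Finset.mem_filter] at hf
  have hbad : ¬ goodF H G f := fun h => hf.2 ⟨hf.1, h⟩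
  rw [goodF] at hbad
  push_neg at hbad
  obtain ⟨s, hs, t, ht, hne, hadj⟩ := hbad
  obtain ⟨e₁, he₁, rfl⟩ := Finset.mem_image.mp hs
  obtain ⟨e₂, he₂, rfl⟩ := Finset.mem_image.mp ht
  refine Finset.mem_biUnion.mpr ⟨(e₁, e₂), Finset.mem_product.mpr ⟨he₁, he₂⟩, ?_⟩
  exact Finset.mem_filter.mpr ⟨Finset.mem_univ _, hadj⟩

lemma badpair_card (G : DepRandomGraph n pp dd) (e₁ e₂ : {x // x ∈ H.edgeFinset})
    (hne : e₁ ≠ e₂) :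
    (BadPair H G e₁ e₂).card ≤ n^2 * (2 * dd * n ^ (Fintype.card α - 3)) := by
  classical
  set a₁ := e₁.1.out.1 with ha₁
  set b₁ := e₁.1.out.2 with hb₁
  set c₂ := e₂.1.out.1 with hc₂
  set d₂ := e₂.1.out.2 with hd₂
  have he₁out : s(a₁, b₁) = e₁.1 := Quot.out_eq _
  have he₂out : s(c₂, d₂) = e₂.1 := Quot.out_eq _
  have hab : a₁ ≠ b₁ := by
    intro h
    exact SimpleGraph.not_isDiag_of_mem_edgeFinset e₁.2
      (he₁out ▸ Sym2.mk_isDiag_iff.mpr h)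
  have hcd : c₂ ≠ d₂ := by
    intro h
    exact SimpleGraph.not_isDiag_of_mem_edgeFinset e₂.2
      (he₂out ▸ Sym2.mk_isDiag_iff.mpr h)
  set W : Finset α := {a₁, b₁, c₂, d₂} with hW
  have hW3 : 3 ≤ W.card := by
    have hz : c₂ ∉ ({a₁, b₁} : Finset α) ∨ d₂ ∉ ({a₁, b₁} : Finset α) := by
      by_contra hcon
      push_neg at hcon
      obtain ⟨hc, hd⟩ := hcon
      apply hne
      apply Subtype.ext
      rw [← he₁out, ← he₂out]
      simp only [Finset.mem_insert, Finset.mem_singleton] at hc hd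
      rcases hc with hc | hc <;> rcases hd with hd | hd
      · exact absurd (hc ▸ hd ▸ rfl) hcd
      · rw [hc, hd]
      · rw [hc, hd]; exact (Sym2.eq_swap).symm
      · exact absurd (hc ▸ hd ▸ rfl) hcd
    have hsub : ∀ z, z ∉ ({a₁, b₁} : Finset α) → z ∈ W → 3 ≤ W.card := by
      intro z hz1 hz2
      have h1 : insert z ({a₁, b₁} : Finset α) ⊆ W := by
        intro w hw
        rcases Finset.mem_insert.mp hw with h | h
        · exact h ▸ hz2
        · rcases Finset.mem_insert.mp h with h' | h'
          · exact h' ▸ (by simp [hW])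
          · rw [Finset.mem_singleton] at h'
            exact h' ▸ (by simp [hW])
      have h2 : (insert z ({a₁, b₁} : Finset α)).card = 3 := by
        rw [Finset.card_insert_of_notMem hz1, Finset.card_insert_of_notMem (by simpa using hab),
          Finset.card_singleton]
      exact h2 ▸ Finset.card_le_card h1
    rcases hz with h | h
    · exact hsub c₂ h (by simp [hW])
    · exact hsub d₂ h (by simp [hW])
  -- decompose according to the images of a₁ b₁
  have hdecomp : BadPair H G e₁ e₂ ⊆
      (Finset.univ : Finset (Fin n × Fin n)).biUnion
        (fun xy => (BadPair H G e₁ e₂).filter (fun f => f a₁ = xy.1 ∧ f b₁ = xy.2)) := by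
    intro f hf
    exact Finset.mem_biUnion.mpr ⟨(f a₁, f b₁), Finset.mem_univ _,
      Finset.mem_filter.mpr ⟨hf, rfl, rfl⟩⟩
  have hfiber : ∀ xy : Fin n × Fin n,
      ((BadPair H G e₁ e₂).filter (fun f => f a₁ = xy.1 ∧ f b₁ = xy.2)).card ≤
        2 * dd * n ^ (Fintype.card α - 3) := by
    intro xy
    set Fib := (BadPair H G e₁ e₂).filter (fun f => f a₁ = xy.1 ∧ f b₁ = xy.2) with hFib
    rcases Finset.eq_empty_or_nonempty Fib with hFe | ⟨f₀, hf₀⟩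
    · simp [hFe]
    have hn : 0 < n := (f₀ a₁).pos
    have hf₀mem : ∀ f ∈ Fib, slot H f e₁ = slot H f₀ e₁ := by
      intro f hf
      obtain ⟨hf1, hfa, hfb⟩ := Finset.mem_filter.mp hf
      obtain ⟨hg1, hga, hgb⟩ := Finset.mem_filter.mp hf₀
      apply Subtype.ext
      rw [slot_eq_pair, slot_eq_pair, ← ha₁, ← hb₁, hfa, hfb, hga, hgb]
    set s₀ := slot H f₀ e₁ with hs₀
    have hmemnbr : ∀ f ∈ Fib, slot H f e₂ ∈ nbr G s₀ := by
      intro f hf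
      rw [← hf₀mem f hf]
      exact mem_nbr.mpr (Finset.mem_filter.mp (Finset.mem_filter.mp hf).1).2
    have ht₀ : slot H f₀ e₂ ∈ nbr G s₀ := hmemnbr f₀ hf₀
    have hcard : Fib.card ≤ Fintype.card
        ({t // t ∈ nbr G s₀} × Bool × ({a : α // a ∉ W} → Fin n)) := by
      rw [← Finset.card_univ]
      refine Finset.card_le_card_of_injOn (fun f =>
        ((if h : slot H f e₂ ∈ nbr G s₀ then ⟨slot H f e₂, h⟩ else ⟨slot H f₀ e₂, ht₀⟩),
         decide (f c₂ = (slot H f e₂).1.out.1),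
         fun a => f a.1)) (fun f hf => Finset.mem_univ _) ?_
      intro f hf f' hf' heq
      have h1 : (if h : slot H f e₂ ∈ nbr G s₀ then (⟨slot H f e₂, h⟩ : {t // t ∈ nbr G s₀})
            else ⟨slot H f₀ e₂, ht₀⟩)
          = (if h : slot H f' e₂ ∈ nbr G s₀ then ⟨slot H f' e₂, h⟩
            else ⟨slot H f₀ e₂, ht₀⟩) := congrArg Prod.fst heq
      have h2 : decide (f c₂ = (slot H f e₂).1.out.1)
          = decide (f' c₂ = (slot H f' e₂).1.out.1) :=
        congrArg (fun q => q.2.1) heq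
      have h3 : (fun (a : {a : α // a ∉ W}) => f a.1) = (fun a => f' a.1) :=
        congrArg (fun q => q.2.2) heq
      rw [dif_pos (hmemnbr f hf), dif_pos (hmemnbr f' hf')] at h1
      have hslot2 : slot H f e₂ = slot H f' e₂ := Subtype.ext_iff.mp h1
      -- now deduce values on c₂ d₂
      have hpair : s(f c₂, f d₂) = s(f' c₂, f' d₂) := by
        have u := congrArg Subtype.val hslot2
        rw [slot_eq_pair, slot_eq_pair] at u
        exact u
      have hfc : f c₂ = f' c₂ ∧ f d₂ = f' d₂ := by
        rcases Sym2.eq_iff.mp hpair with ⟨u1, u2⟩ | ⟨u1, u2⟩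
        · exact ⟨u1, u2⟩
        · -- swapped case: use the bit h2
          exfalso
          have hbit : (f c₂ = (slot H f e₂).1.out.1) ↔ (f' c₂ = (slot H f' e₂).1.out.1) := by
            rw [← decide_eq_decide]
            exact h2
          rw [← hslot2] at hbit
          have houtpair : s((slot H f e₂).1.out.1, (slot H f e₂).1.out.2) = s(f c₂, f d₂) :=
            (Quot.out_eq _).trans (slot_eq_pair H f e₂)
          have hfcfd : f c₂ ≠ f d₂ := fun h => hcd (f.injective h)
          rcases Sym2.eq_iff.mp houtpair with ⟨v1, v2⟩ | ⟨v1, v2⟩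
          · have h5 : f' c₂ = (slot H f e₂).1.out.1 := hbit.mp v1.symm
            have h6 : f c₂ = f d₂ := by
              rw [← v1]
              exact (u2.trans h5).symm
            exact hfcfd h6
          · have h5 : f' c₂ = (slot H f e₂).1.out.1 := u2.symm.trans v1.symm
            have h6 : f c₂ = f d₂ := (hbit.mpr h5).trans v1
            exact hfcfd h6
      have hval : ∀ a : α, f a = f' a := by
        intro a
        by_cases haW : a ∈ W
        · obtain ⟨hfa, hfb⟩ := (Finset.mem_filter.mp hf).2
          obtain ⟨hga, hgb⟩ := (Finset.mem_filter.mp hf').2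
          simp only [hW, Finset.mem_insert, Finset.mem_singleton] at haW
          rcases haW with h | h | h | h
          · rw [h, hfa, hga]
          · rw [h, hfb, hgb]
          · rw [h]; exact hfc.1
          · rw [h]; exact hfc.2
        · exact congrFun h3 ⟨a, haW⟩
      exact DFunLike.coe_injective (funext hval)
    calc Fib.card ≤ _ := hcard
      _ = (nbr G s₀).card * (2 * n ^ (Fintype.card α - W.card)) := by
          rw [Fintype.card_prod, Fintype.card_prod, Fintype.card_coe, Fintype.card_bool,
            Fintype.card_fun, Fintype.card_fin, Fintype.card_subtype_compl, Fintype.card_coe]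
      _ ≤ dd * (2 * n ^ (Fintype.card α - 3)) := by
          refine Nat.mul_le_mul (card_nbr G s₀) (Nat.mul_le_mul_left _ ?_)
          exact Nat.pow_le_pow_right hn (by omega)
      _ = 2 * dd * n ^ (Fintype.card α - 3) := by ring
  calc (BadPair H G e₁ e₂).card
      ≤ ((Finset.univ : Finset (Fin n × Fin n)).biUnion
          (fun xy => (BadPair H G e₁ e₂).filter (fun f => f a₁ = xy.1 ∧ f b₁ = xy.2))).card :=
        Finset.card_le_card hdecomp
    _ ≤ ∑ xy : Fin n × Fin n, ((BadPair H G e₁ e₂).filter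
          (fun f => f a₁ = xy.1 ∧ f b₁ = xy.2)).card := Finset.card_biUnion_le
    _ ≤ ∑ _xy : Fin n × Fin n, 2 * dd * n ^ (Fintype.card α - 3) :=
        Finset.sum_le_sum (fun xy _ => hfiber xy)
    _ = n^2 * (2 * dd * n ^ (Fintype.card α - 3)) := by
        rw [Finset.sum_const, Finset.card_univ, Fintype.card_prod, Fintype.card_fin,
          smul_eq_mul, sq]


lemma three_le_of_two_edges (e₁ e₂ : {x // x ∈ H.edgeFinset}) (hne : e₁ ≠ e₂) :
    3 ≤ Fintype.card α := by
  classical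
  set a₁ := e₁.1.out.1 with ha₁
  set b₁ := e₁.1.out.2 with hb₁
  set c₂ := e₂.1.out.1 with hc₂
  set d₂ := e₂.1.out.2 with hd₂
  have he₁out : s(a₁, b₁) = e₁.1 := Quot.out_eq _
  have he₂out : s(c₂, d₂) = e₂.1 := Quot.out_eq _
  have hab : a₁ ≠ b₁ := by
    intro h
    exact SimpleGraph.not_isDiag_of_mem_edgeFinset e₁.2
      (he₁out ▸ Sym2.mk_isDiag_iff.mpr h)
  have hcd : c₂ ≠ d₂ := by
    intro h
    exact SimpleGraph.not_isDiag_of_mem_edgeFinset e₂.2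
      (he₂out ▸ Sym2.mk_isDiag_iff.mpr h)
  have hz : c₂ ∉ ({a₁, b₁} : Finset α) ∨ d₂ ∉ ({a₁, b₁} : Finset α) := by
    by_contra hcon
    push_neg at hcon
    obtain ⟨hc, hd⟩ := hcon
    apply hne
    apply Subtype.ext
    rw [← he₁out, ← he₂out]
    simp only [Finset.mem_insert, Finset.mem_singleton] at hc hd
    rcases hc with hc | hc <;> rcases hd with hd | hd
    · exact absurd (hc ▸ hd ▸ rfl) hcd
    · rw [hc, hd]
    · rw [hc, hd]; exact (Sym2.eq_swap).symm
    · exact absurd (hc ▸ hd ▸ rfl) hcd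
  have hfin : ∀ z, z ∉ ({a₁, b₁} : Finset α) → 3 ≤ Fintype.card α := by
    intro z hz1
    have h2 : (insert z ({a₁, b₁} : Finset α)).card = 3 := by
      rw [Finset.card_insert_of_notMem hz1, Finset.card_insert_of_notMem (by simpa using hab),
        Finset.card_singleton]
    calc 3 = (insert z ({a₁, b₁} : Finset α)).card := h2.symm
      _ ≤ (Finset.univ : Finset α).card := Finset.card_le_card (Finset.subset_univ _)
      _ = Fintype.card α := Finset.card_univ
  rcases hz with h | h
  · exact hfin c₂ h
  · exact hfin d₂ h

lemma notgood_card (G : DepRandomGraph n pp dd) :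
    ((Finset.univ : Finset (α ↪ Fin n)) \ Good H G).card ≤
      H.edgeFinset.card^2 * (2 * dd * n ^ (Fintype.card α - 1)) := by
  classical
  by_cases hex : ∃ e₁ e₂ : {x // x ∈ H.edgeFinset}, e₁ ≠ e₂
  · obtain ⟨u₁, u₂, hu⟩ := hex
    have hv3 : 3 ≤ Fintype.card α := three_le_of_two_edges H u₁ u₂ hu
    calc ((Finset.univ : Finset (α ↪ Fin n)) \ Good H G).card
        ≤ ((H.edgeFinset.attach ×ˢ H.edgeFinset.attach).biUnion
            (fun q => BadPair H G q.1 q.2)).card :=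
          Finset.card_le_card (not_good_subset H G)
      _ ≤ ∑ q ∈ H.edgeFinset.attach ×ˢ H.edgeFinset.attach, (BadPair H G q.1 q.2).card :=
          Finset.card_biUnion_le
      _ ≤ ∑ _q ∈ H.edgeFinset.attach ×ˢ H.edgeFinset.attach,
            n^2 * (2 * dd * n ^ (Fintype.card α - 3)) := by
          refine Finset.sum_le_sum (fun q _ => ?_)
          by_cases hq : q.1 = q.2
          · have : BadPair H G q.1 q.2 = ∅ := by
              rw [BadPair, Finset.filter_eq_empty_iff]
              intro f _
              rw [hq]
              exact G.D.loopless.irrefl _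
            simp [this]
          · exact badpair_card H G q.1 q.2 hq
      _ = H.edgeFinset.card^2 * (n^2 * (2 * dd * n ^ (Fintype.card α - 3))) := by
          rw [Finset.sum_const, Finset.card_product, Finset.card_attach, smul_eq_mul]
          ring
      _ = H.edgeFinset.card^2 * (2 * dd * n ^ (Fintype.card α - 1)) := by
          have h9 : n^2 * (2 * dd * n ^ (Fintype.card α - 3)) =
              2 * dd * (n^2 * n ^ (Fintype.card α - 3)) := by ring
          have hexp : 2 + (Fintype.card α - 3) = Fintype.card α - 1 := by omega
          rw [h9, ← pow_add, hexp]
  · push_neg at hex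
    have : (Finset.univ : Finset (α ↪ Fin n)) \ Good H G = ∅ := by
      rw [Finset.eq_empty_iff_forall_notMem]
      intro f hf
      rw [Finset.mem_sdiff, Good, Finset.mem_filter] at hf
      apply hf.2
      refine ⟨hf.1, fun s hs t ht hst => ?_⟩
      obtain ⟨d₁, hd₁, rfl⟩ := Finset.mem_image.mp hs
      obtain ⟨d₂, hd₂, rfl⟩ := Finset.mem_image.mp ht
      exact absurd (hex d₁ d₂ ▸ rfl) hst
    simp [this]

lemma good_card_lower (G : DepRandomGraph n pp dd) :
    n.descFactorial (Fintype.card α) ≤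
      (Good H G).card + H.edgeFinset.card^2 * (2 * dd * n ^ (Fintype.card α - 1)) := by
  classical
  have h0 : (Finset.univ : Finset (α ↪ Fin n)).card = n.descFactorial (Fintype.card α) := by
    rw [Finset.card_univ, Fintype.card_embedding_eq, Fintype.card_fin]
  have h1 : (Finset.univ : Finset (α ↪ Fin n)).card ≤
      (Good H G).card + ((Finset.univ : Finset (α ↪ Fin n)) \ Good H G).card := by
    have := Finset.card_sdiff_add_card_eq_card (Finset.subset_univ (Good H G))
    omega
  calc n.descFactorial (Fintype.card α) = _ := h0.symm
    _ ≤ (Good H G).card + ((Finset.univ : Finset (α ↪ Fin n)) \ Good H G).card := h1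
    _ ≤ _ := Nat.add_le_add_left (notgood_card H G) _

lemma M_real_lower (G : DepRandomGraph n pp dd)
    (hv1 : 1 ≤ Fintype.card α) (hn2v : 2 * Fintype.card α ≤ n)
    (hD : ((H.edgeFinset.card:ℝ))^2 * 2 * dd * 2^(Fintype.card α + 1) ≤ n) :
    (n:ℝ)^(Fintype.card α) / 2^(Fintype.card α + 1) ≤ ((Good H G).card : ℝ) := by
  set v := Fintype.card α with hv
  set E := H.edgeFinset.card with hE
  have hn0 : 0 < n := by omega
  have hdesc : ((n:ℝ)/2)^v ≤ (n.descFactorial v : ℝ) := by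
    have h1 : (n + 1 - v)^v ≤ n.descFactorial v := Nat.pow_sub_le_descFactorial n v
    have h2 : ((n:ℝ)/2) ≤ ((n + 1 - v : ℕ) : ℝ) := by
      have hc : ((n + 1 - v : ℕ) : ℝ) = (n:ℝ) + 1 - v := by
        have : v ≤ n + 1 := by omega
        push_cast [this]
        ring
      rw [hc]
      have h10 : (2*(v:ℝ)) ≤ n := by exact_mod_cast hn2v
      linarith
    calc ((n:ℝ)/2)^v ≤ (((n + 1 - v : ℕ) : ℝ))^v := by
          apply pow_le_pow_left₀ (by positivity) h2
      _ ≤ (n.descFactorial v : ℝ) := by exact_mod_cast h1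
  have hbad : ((E:ℝ))^2 * (2 * dd * (n:ℝ)^(v-1)) ≤ (n:ℝ)^v / 2^(v+1) := by
    have hnn : (n:ℝ)^(v-1) * (n:ℝ) = (n:ℝ)^v := by
      rw [← pow_succ]
      congr 1
      omega
    have h1 : ((E:ℝ))^2 * 2 * dd ≤ (n:ℝ)/2^(v+1) := by
      rw [le_div_iff₀ (by positivity)]
      exact hD
    calc ((E:ℝ))^2 * (2 * dd * (n:ℝ)^(v-1)) = ((E:ℝ)^2 * 2 * dd) * (n:ℝ)^(v-1) := by ring
      _ ≤ ((n:ℝ)/2^(v+1)) * (n:ℝ)^(v-1) := mul_le_mul_of_nonneg_right h1 (by positivity)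
      _ = (n:ℝ)^v / 2^(v+1) := by
          rw [div_mul_eq_mul_div, mul_comm ((n:ℝ)) _, hnn]
  have hcast := good_card_lower H G
  have hcastR : (n.descFactorial v : ℝ) ≤ ((Good H G).card : ℝ) + (E:ℝ)^2 * (2 * dd * (n:ℝ)^(v-1)) := by
    exact_mod_cast hcast
  have hhalf : ((n:ℝ)/2)^v = (n:ℝ)^v/2^v := div_pow (n:ℝ) 2 v
  have h2v : (n:ℝ)^v/2^v - (n:ℝ)^v/2^(v+1) = (n:ℝ)^v/2^(v+1) := by
    rw [pow_succ]
    field_simp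
    ring
  linarith

lemma VG_card_eq (Γ : Finset {x // x ∈ H.edgeFinset}) :
    (VG H Γ).card = edgeVertCount (Γ.image Subtype.val) := by
  classical
  rw [edgeVertCount]
  have h : {v : α | ∃ e ∈ Γ.image Subtype.val, v ∈ e} = ↑(VG H Γ) := by
    ext a
    simp [VG]
  rw [h, Set.ncard_coe_finset]


lemma mH_spec {mH : ℝ}
    (hmH : mH = sSup {r : ℝ | ∃ Γ ∈ H.edgeFinset.powerset.erase ∅,
        r = (Γ.card : ℝ) / (edgeVertCount Γ : ℝ)})
    {Γ : Finset (Sym2 α)} (hΓ : Γ ∈ H.edgeFinset.powerset.erase ∅) :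
    (Γ.card : ℝ) / (edgeVertCount Γ : ℝ) ≤ mH := by
  classical
  rw [hmH]
  have hset : {r : ℝ | ∃ Γ ∈ H.edgeFinset.powerset.erase ∅,
      r = (Γ.card : ℝ) / (edgeVertCount Γ : ℝ)} =
      ↑((H.edgeFinset.powerset.erase ∅).image
        (fun Γ => (Γ.card : ℝ) / (edgeVertCount Γ : ℝ))) := by
    ext r
    simp only [Finset.coe_image, Set.mem_image, Finset.mem_coe, Finset.mem_erase,
      Finset.mem_powerset, Set.mem_setOf_eq]
    tauto
  rw [hset]
  apply le_csSup (Finset.bddAbove _)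
  rw [Finset.mem_coe]
  exact Finset.mem_image_of_mem _ hΓ

lemma evc_pos {Γ : Finset (Sym2 α)} (hne : Γ.Nonempty) : 0 < edgeVertCount Γ := by
  rw [edgeVertCount, Set.ncard_pos (Set.toFinite _)]
  obtain ⟨e, he⟩ := hne
  exact ⟨e.out.1, e, he, Sym2.out_fst_mem e⟩

lemma mH_pos {mH : ℝ}
    (hmH : mH = sSup {r : ℝ | ∃ Γ ∈ H.edgeFinset.powerset.erase ∅,
        r = (Γ.card : ℝ) / (edgeVertCount Γ : ℝ)})
    (hE : H.edgeFinset.Nonempty) : 0 < mH := by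
  obtain ⟨e, he⟩ := hE
  have hmem : ({e} : Finset (Sym2 α)) ∈ H.edgeFinset.powerset.erase ∅ := by
    rw [Finset.mem_erase, Finset.mem_powerset]
    exact ⟨Finset.singleton_ne_empty e, Finset.singleton_subset_iff.mpr he⟩
  have h1 := mH_spec H hmH hmem
  have h2 : (0:ℝ) < (({e} : Finset (Sym2 α)).card : ℝ) / (edgeVertCount {e} : ℝ) := by
    rw [Finset.card_singleton]
    have := evc_pos (Γ := ({e} : Finset (Sym2 α))) ⟨e, Finset.mem_singleton_self e⟩
    positivity
  linarith

lemma mH_mul {mH : ℝ}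
    (hmH : mH = sSup {r : ℝ | ∃ Γ ∈ H.edgeFinset.powerset.erase ∅,
        r = (Γ.card : ℝ) / (edgeVertCount Γ : ℝ)})
    {Γ : Finset (Sym2 α)} (hsub : Γ ⊆ H.edgeFinset) (hne : Γ.Nonempty) :
    (Γ.card : ℝ) ≤ mH * (edgeVertCount Γ : ℝ) := by
  have hmem : Γ ∈ H.edgeFinset.powerset.erase ∅ := by
    rw [Finset.mem_erase, Finset.mem_powerset]
    exact ⟨Finset.nonempty_iff_ne_empty.mp hne, hsub⟩
  have h1 := mH_spec H hmH hmem
  have h2 : (0:ℝ) < (edgeVertCount Γ : ℝ) := by exact_mod_cast evc_pos hne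
  rw [div_le_iff₀ h2] at h1
  linarith [h1]

/-- the per-Γ analytic inequality -/
lemma analytic_core (mH w ppv M : ℝ) (n dd E v eΓ vΓ : ℕ) (ε' : ℝ)
    (hm0 : 0 < mH) (hε' : 0 < ε') (hn0 : 0 < n)
    (hB1 : 1 ≤ (n:ℝ)/((dd:ℝ)+1))
    (hpp : ppv * ((n:ℝ)/((dd:ℝ)+1)) ^ (1/mH) = w) (hpp0 : 0 < ppv)
    (hw1 : 1 ≤ w)
    (hwbig : (2*(E:ℝ))^v * 2^(v+1) ≤ ε' * w)
    (heΓ1 : 1 ≤ eΓ) (hvΓv : vΓ ≤ v) (hE1 : 1 ≤ E)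
    (hkey : (eΓ:ℝ) ≤ mH * vΓ)
    (hM : (n:ℝ)^v/2^(v+1) ≤ M) :
    (((2*(E*(dd+1)))^vΓ * n^(v-vΓ) : ℕ) : ℝ) ≤ ε' * M * ppv^eΓ := by
  set b : ℝ := (n:ℝ)/((dd:ℝ)+1) with hb
  have hb0 : 0 < b := lt_of_lt_of_le one_pos hB1
  have hbr0 : 0 < b ^ (1/mH) := Real.rpow_pos_of_pos hb0 _
  have hd0 : (0:ℝ) < (dd:ℝ)+1 := by positivity
  have s1 : ppv = w / b ^ (1/mH) := by
    rw [← hpp]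
    field_simp
  have s2 : (b ^ (1/mH)) ^ eΓ ≤ b ^ vΓ := by
    have h1 : (b ^ (1/mH)) ^ eΓ = b ^ ((1/mH) * eΓ) := by
      rw [← Real.rpow_natCast (b ^ (1/mH)) eΓ, ← Real.rpow_mul hb0.le]
    have h2 : (1/mH) * (eΓ:ℝ) ≤ (vΓ:ℝ) := by
      rw [one_div, inv_mul_le_iff₀ hm0]
      linarith [hkey]
    calc (b ^ (1/mH)) ^ eΓ = b ^ ((1/mH) * (eΓ:ℝ)) := h1
      _ ≤ b ^ ((vΓ:ℝ)) := Real.rpow_le_rpow_of_exponent_le hB1 h2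
      _ = b ^ vΓ := Real.rpow_natCast b vΓ
  have s4 : w^eΓ / b^vΓ ≤ ppv^eΓ := by
    have h7 : ppv^eΓ = w^eΓ / (b^(1/mH))^eΓ := by
      rw [s1, div_pow]
    rw [h7]
    exact div_le_div_of_nonneg_left (by positivity) (by positivity) s2
  -- the coefficient inequality
  have hkeycoef : (2*(E:ℝ))^vΓ * 2^(v+1) ≤ ε' * w^eΓ := by
    calc (2*(E:ℝ))^vΓ * 2^(v+1) ≤ (2*(E:ℝ))^v * 2^(v+1) := by
          apply mul_le_mul_of_nonneg_right _ (by positivity)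
          apply pow_le_pow_right₀ _ hvΓv
          have : (1:ℝ) ≤ (E:ℝ) := by exact_mod_cast hE1
          linarith
      _ ≤ ε' * w := hwbig
      _ ≤ ε' * w^eΓ := by
          apply mul_le_mul_of_nonneg_left _ hε'.le
          exact le_self_pow₀ hw1 (by omega)
  -- algebraic identities
  have hnsub : (n:ℝ)^(v-vΓ) * (n:ℝ)^vΓ = (n:ℝ)^v := pow_sub_mul_pow (n:ℝ) hvΓv
  have hcast : (((2*(E*(dd+1)))^vΓ * n^(v-vΓ) : ℕ) : ℝ) =
      (2*(E:ℝ))^vΓ * ((dd:ℝ)+1)^vΓ * (n:ℝ)^(v-vΓ) := by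
    push_cast
    rw [← mul_pow]
    ring
  have hbpow : b^vΓ = (n:ℝ)^vΓ / ((dd:ℝ)+1)^vΓ := div_pow _ _ _
  have hRHS : ε' * ((n:ℝ)^v/2^(v+1)) * (w^eΓ / b^vΓ) =
      (ε' * w^eΓ / 2^(v+1)) * (((dd:ℝ)+1)^vΓ * (n:ℝ)^(v-vΓ)) := by
    rw [hbpow]
    rw [div_div_eq_mul_div, ← hnsub]
    field_simp
  calc (((2*(E*(dd+1)))^vΓ * n^(v-vΓ) : ℕ) : ℝ)
      = (2*(E:ℝ))^vΓ * (((dd:ℝ)+1)^vΓ * (n:ℝ)^(v-vΓ)) := by rw [hcast]; ring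
    _ ≤ (ε' * w^eΓ / 2^(v+1)) * (((dd:ℝ)+1)^vΓ * (n:ℝ)^(v-vΓ)) := by
        apply mul_le_mul_of_nonneg_right _ (by positivity)
        rw [le_div_iff₀ (by positivity)]
        exact hkeycoef
    _ = ε' * ((n:ℝ)^v/2^(v+1)) * (w^eΓ / b^vΓ) := hRHS.symm
    _ ≤ ε' * M * (w^eΓ / b^vΓ) := by
        apply mul_le_mul_of_nonneg_right _ (by positivity)
        exact mul_le_mul_of_nonneg_left hM hε'.le
    _ ≤ ε' * M * ppv^eΓ := by
        apply mul_le_mul_of_nonneg_left s4 _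
        have hM0 : (0:ℝ) ≤ M := le_trans (by positivity) hM
        positivity

end SCT

theorem subgraph_containment_threshold
    {α : Type} [Fintype α] [DecidableEq α] (H : SimpleGraph α) [Fintype H.edgeSet]
    (hE : H.edgeFinset.Nonempty) (hiso : ∀ v : α, ∃ u : α, H.Adj v u)
    (mH : ℝ)
    (hmH : mH = sSup {r : ℝ | ∃ Γ ∈ H.edgeFinset.powerset.erase ∅,
        r = (Γ.card : ℝ) / (edgeVertCount Γ : ℝ)})
    (p : ℕ → ℝ) (d : ℕ → ℕ)
    (hthr : Tendsto (fun n : ℕ => p n * ((n : ℝ) / ((d n : ℝ) + 1)) ^ (1 / mH)) atTop atTop)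
    (G : (n : ℕ) → DepRandomGraph n (p n) (d n)) :
    Tendsto (fun n : ℕ => (G n).μ {ω | ContainsCopy ((G n).graph ω) H}) atTop (nhds 1) := by
  classical
  have hm0 : 0 < mH := SCT.mH_pos H hmH hE
  have hE1 : 1 ≤ H.edgeFinset.card := Finset.card_pos.mpr hE
  have hv1 : 1 ≤ Fintype.card α := by
    obtain ⟨e, he⟩ := hE
    have : Nonempty α := ⟨e.out.1⟩
    exact Fintype.card_pos
  have main : ∀ ε : ℝ, 0 < ε → ∀ᶠ k in atTop,
      ENNReal.ofReal (1/(1+ε)) ≤ (G k).μ {ω | ContainsCopy ((G k).graph ω) H} := by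
    intro ε hε
    set E : ℕ := H.edgeFinset.card with hEdef
    set v : ℕ := Fintype.card α with hvdef
    have hε'0 : 0 < ε / 2^E := by positivity
    set ε' : ℝ := ε / 2^E with hε'def
    set Tbig : ℝ := max (2*(v:ℝ)) (max ((E:ℝ)^2*2*2^(v+1)+1) 1) with hTbigdef
    have hTbig1 : 1 ≤ Tbig := le_max_of_le_right (le_max_right _ _)
    set Wbig : ℝ := max 1 ((2*(E:ℝ))^v * 2^(v+1) / ε') with hWbigdef
    have hWbig1 : 1 ≤ Wbig := le_max_left _ _
    filter_upwards [hthr.eventually_ge_atTop (Wbig + (Tbig^(1/mH) + 1)),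
      eventually_ge_atTop 2] with k hk1 hk2
    set b : ℝ := (k:ℝ)/((d k:ℝ)+1) with hbdef
    set wk : ℝ := p k * b ^ (1/mH) with hwkdef
    have hd0 : (0:ℝ) < (d k:ℝ)+1 := by positivity
    have hb0 : (0:ℝ) ≤ b := by positivity
    have hTr0 : (0:ℝ) ≤ Tbig^(1/mH) := Real.rpow_nonneg (by linarith) _
    have hw1 : 1 ≤ wk := by linarith
    have hp0 : 0 < p k := by
      by_contra hle
      push_neg at hle
      have h8 : wk ≤ 0 := mul_nonpos_of_nonpos_of_nonneg hle (Real.rpow_nonneg hb0 _)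
      linarith
    have hp1 : p k ≤ 1 := by
      have hne01 : ((⟨0, by omega⟩ : Fin k)) ≠ (⟨1, by omega⟩ : Fin k) := by
        intro hcon
        have := Fin.mk.injEq 0 (by omega : 0 < k) 1 (by omega : 1 < k) ▸ hcon
        simp at this
      set e0 : EdgeIdx k := ⟨s((⟨0, by omega⟩ : Fin k), (⟨1, by omega⟩ : Fin k)), by
        rw [Sym2.mk_isDiag_iff]; exact hne01⟩ with he0
      have hprob := (G k).probX e0
      have hle1 : (G k).μ {ω | (G k).X e0 ω = true} ≤ 1 := prob_le_one
      rw [hprob] at hle1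
      exact ENNReal.ofReal_le_one.mp hle1
    have hbr : b^(1/mH) = wk / p k := by
      rw [hwkdef]
      field_simp
    have hTb : Tbig ≤ b := by
      have h1 : Tbig^(1/mH) ≤ b^(1/mH) := by
        rw [hbr]
        have hwt : Tbig^(1/mH) ≤ wk := by linarith
        calc Tbig^(1/mH) ≤ wk := hwt
          _ ≤ wk / p k := by
              rw [le_div_iff₀ hp0]
              nlinarith
      have h2 := Real.rpow_le_rpow (Real.rpow_nonneg (by linarith : (0:ℝ) ≤ Tbig) _) h1 hm0.le
      have e1 : (Tbig^(1/mH))^mH = Tbig := by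
        rw [← Real.rpow_mul (by linarith), one_div, inv_mul_cancel₀ hm0.ne', Real.rpow_one]
      have e2 : (b^(1/mH))^mH = b := by
        rw [← Real.rpow_mul hb0, one_div, inv_mul_cancel₀ hm0.ne', Real.rpow_one]
      rw [e1, e2] at h2
      exact h2
    have hB1 : (1:ℝ) ≤ b := le_trans hTbig1 hTb
    have hk0 : 0 < k := by omega
    have hbk : b ≤ (k:ℝ) := by
      rw [hbdef, div_le_iff₀ hd0]
      nlinarith [(Nat.cast_nonneg (d k) : (0:ℝ) ≤ (d k:ℝ)), (Nat.cast_nonneg k : (0:ℝ) ≤ (k:ℝ))]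
    have h2v : 2 * v ≤ k := by
      have h9 : (2*(v:ℝ)) ≤ (k:ℝ) := le_trans (le_trans (le_max_left _ _) hTb) hbk
      exact_mod_cast h9
    have hD : ((E:ℝ))^2 * 2 * (d k) * 2^(v+1) ≤ (k:ℝ) := by
      have hC : (E:ℝ)^2*2*2^(v+1)+1 ≤ b :=
        le_trans (le_max_of_le_right (le_max_left _ _)) hTb
      have hbmul : b * ((d k:ℝ)+1) = (k:ℝ) := by
        rw [hbdef]
        field_simp
      nlinarith [(Nat.cast_nonneg (d k) : (0:ℝ) ≤ (d k:ℝ)),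
        pow_pos (by norm_num : (0:ℝ) < 2) (v+1), sq_nonneg (E:ℝ)]
    have hM := SCT.M_real_lower H (G k) hv1 h2v hD
    have hMpos : 0 < (SCT.Good H (G k)).card := by
      by_contra h0
      push_neg at h0
      have hc0 : (SCT.Good H (G k)).card = 0 := by omega
      rw [hc0] at hM
      have h10 : (0:ℝ) < (k:ℝ)^v/2^(v+1) := by positivity
      simp at hM
      linarith
    have hwbig : (2*(E:ℝ))^v * 2^(v+1) ≤ ε' * wk := by
      have h11 : (2*(E:ℝ))^v * 2^(v+1) / ε' ≤ Wbig := le_max_right _ _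
      have h12 : Wbig ≤ wk := by linarith
      rw [div_le_iff₀ hε'0] at h11
      calc (2*(E:ℝ))^v * 2^(v+1) ≤ Wbig * ε' := h11
        _ ≤ wk * ε' := mul_le_mul_of_nonneg_right h12 hε'0.le
        _ = ε' * wk := mul_comm _ _
    have hKb : SCT.KK H (G k) ≤ ENNReal.ofReal ε *
        (((SCT.Good H (G k)).card : ℝ≥0∞) * (ENNReal.ofReal (p k)) ^ (2 * E)) := by
      rw [SCT.KK]
      have hterm : ∀ Γ ∈ (H.edgeFinset.attach.powerset).erase ∅,
          (ENNReal.ofReal (p k)) ^ (2 * H.edgeFinset.card - Γ.card) *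
            (((2 * (H.edgeFinset.card * (d k + 1))) ^ ((SCT.VG H Γ).card) *
              k ^ (Fintype.card α - (SCT.VG H Γ).card) : ℕ) : ℝ≥0∞) ≤
          ENNReal.ofReal ε' *
            (((SCT.Good H (G k)).card : ℝ≥0∞) * (ENNReal.ofReal (p k)) ^ (2 * E)) := by
        intro Γ hΓ
        obtain ⟨hΓne, hΓsub⟩ := Finset.mem_erase.mp hΓ
        have hΓsub' := Finset.mem_powerset.mp hΓsub
        have hΓnonempty : Γ.Nonempty := Finset.nonempty_iff_ne_empty.mpr hΓne
        have heΓE : Γ.card ≤ E := le_trans (Finset.card_le_card hΓsub')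
          (le_of_eq (Finset.card_attach))
        have heΓ1 : 1 ≤ Γ.card := Finset.card_pos.mpr hΓnonempty
        have hvΓv : (SCT.VG H Γ).card ≤ v := SCT.VG_card_le H Γ
        have hkey : (Γ.card:ℝ) ≤ mH * (SCT.VG H Γ).card := by
          have h1 : (Γ.image Subtype.val).card = Γ.card :=
            Finset.card_image_of_injective _ Subtype.val_injective
          have h2 : Γ.image Subtype.val ⊆ H.edgeFinset := by
            intro x hx
            obtain ⟨e, he, rfl⟩ := Finset.mem_image.mp hx
            exact e.2
          have h3 : (Γ.image Subtype.val).Nonempty := hΓnonempty.image _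
          have h4 := SCT.mH_mul H hmH h2 h3
          rw [h1, ← SCT.VG_card_eq H Γ] at h4
          exact h4
        have hreal := SCT.analytic_core mH wk (p k) (((SCT.Good H (G k)).card : ℝ))
          k (d k) E v Γ.card ((SCT.VG H Γ).card) ε'
          hm0 hε'0 hk0 hB1 (by rw [hwkdef]) hp0 hw1 hwbig heΓ1 hvΓv hE1 hkey hM
        have hM0 : (0:ℝ) ≤ ((SCT.Good H (G k)).card : ℝ) := Nat.cast_nonneg _
        have hENN : (((2 * (E * (d k + 1))) ^ ((SCT.VG H Γ).card) *
              k ^ (v - (SCT.VG H Γ).card) : ℕ) : ℝ≥0∞) ≤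
            ENNReal.ofReal ε' *
              (((SCT.Good H (G k)).card : ℝ≥0∞) * (ENNReal.ofReal (p k)) ^ Γ.card) := by
          rw [← ENNReal.ofReal_natCast (((2 * (E * (d k + 1))) ^ ((SCT.VG H Γ).card) *
              k ^ (v - (SCT.VG H Γ).card) : ℕ)),
            ← ENNReal.ofReal_natCast ((SCT.Good H (G k)).card),
            ← ENNReal.ofReal_pow hp0.le, ← ENNReal.ofReal_mul hM0,
            ← ENNReal.ofReal_mul hε'0.le]
          apply ENNReal.ofReal_le_ofReal
          calc ((((2 * (E * (d k + 1))) ^ ((SCT.VG H Γ).card) *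
              k ^ (v - (SCT.VG H Γ).card) : ℕ)) : ℝ)
              ≤ ε' * ((SCT.Good H (G k)).card : ℝ) * (p k)^Γ.card := hreal
            _ = ε' * (((SCT.Good H (G k)).card : ℝ) * (p k)^Γ.card) := by ring
        calc (ENNReal.ofReal (p k)) ^ (2 * H.edgeFinset.card - Γ.card) *
            (((2 * (H.edgeFinset.card * (d k + 1))) ^ ((SCT.VG H Γ).card) *
              k ^ (Fintype.card α - (SCT.VG H Γ).card) : ℕ) : ℝ≥0∞)
            ≤ (ENNReal.ofReal (p k)) ^ (2 * E - Γ.card) *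
              (ENNReal.ofReal ε' *
                (((SCT.Good H (G k)).card : ℝ≥0∞) * (ENNReal.ofReal (p k)) ^ Γ.card)) :=
              mul_le_mul_right hENN _
          _ = ENNReal.ofReal ε' * (((SCT.Good H (G k)).card : ℝ≥0∞) *
              ((ENNReal.ofReal (p k)) ^ (2 * E - Γ.card) * (ENNReal.ofReal (p k)) ^ Γ.card)) := by
              ring
          _ = ENNReal.ofReal ε' *
              (((SCT.Good H (G k)).card : ℝ≥0∞) * (ENNReal.ofReal (p k)) ^ (2 * E)) := by
              rw [← pow_add]
              congr 3
              omega
      calc ∑ Γ ∈ (H.edgeFinset.attach.powerset).erase ∅,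
            (ENNReal.ofReal (p k)) ^ (2 * H.edgeFinset.card - Γ.card) *
              (((2 * (H.edgeFinset.card * (d k + 1))) ^ ((SCT.VG H Γ).card) *
                k ^ (Fintype.card α - (SCT.VG H Γ).card) : ℕ) : ℝ≥0∞)
          ≤ ∑ _Γ ∈ (H.edgeFinset.attach.powerset).erase ∅,
            ENNReal.ofReal ε' *
              (((SCT.Good H (G k)).card : ℝ≥0∞) * (ENNReal.ofReal (p k)) ^ (2 * E)) :=
            Finset.sum_le_sum hterm
        _ = ((H.edgeFinset.attach.powerset).erase ∅).card •
            (ENNReal.ofReal ε' *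
              (((SCT.Good H (G k)).card : ℝ≥0∞) * (ENNReal.ofReal (p k)) ^ (2 * E))) :=
            Finset.sum_const _
        _ ≤ (((2^E : ℕ)) : ℝ≥0∞) * (ENNReal.ofReal ε' *
              (((SCT.Good H (G k)).card : ℝ≥0∞) * (ENNReal.ofReal (p k)) ^ (2 * E))) := by
            rw [nsmul_eq_mul]
            apply mul_le_mul_left
            have h14 : ((H.edgeFinset.attach.powerset).erase ∅).card ≤ 2^E := by
              calc ((H.edgeFinset.attach.powerset).erase ∅).card
                  ≤ (H.edgeFinset.attach.powerset).card := Finset.card_erase_le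
                _ = 2^E := by rw [Finset.card_powerset, Finset.card_attach]
            exact_mod_cast h14
        _ = ENNReal.ofReal ε *
            (((SCT.Good H (G k)).card : ℝ≥0∞) * (ENNReal.ofReal (p k)) ^ (2 * E)) := by
            rw [← mul_assoc]
            congr 1
            have h13 : ((2^E : ℕ) : ℝ≥0∞) = ENNReal.ofReal ((2:ℝ)^E) := by
              rw [← ENNReal.ofReal_natCast]
              norm_num
            rw [h13, ← ENNReal.ofReal_mul (by positivity)]
            congr 1
            rw [hε'def]
            field_simp
    exact SCT.core H (G k) hε hp0 hMpos hKb
  refine tendsto_order.2 ⟨?_, ?_⟩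
  · intro a ha
    have hane : a ≠ ⊤ := ne_top_of_lt (lt_of_lt_of_le ha le_top)
    set aR := a.toReal with haRdef
    have haR1 : aR < 1 := by
      have := (ENNReal.toReal_lt_toReal hane (by norm_num : (1:ℝ≥0∞) ≠ ⊤)).mpr ha
      simpa using this
    have haR0 : (0:ℝ) ≤ aR := ENNReal.toReal_nonneg
    have hε0 : 0 < (1 - aR)/2 := by linarith
    have hlt : aR < 1/(1+(1 - aR)/2) := by
      rw [lt_div_iff₀ (by linarith)]
      nlinarith
    filter_upwards [main ((1 - aR)/2) hε0] with k hk
    calc a = ENNReal.ofReal aR := (ENNReal.ofReal_toReal hane).symm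
      _ < ENNReal.ofReal (1/(1+(1 - aR)/2)) := by
          rw [ENNReal.ofReal_lt_ofReal_iff (by positivity)]
          exact hlt
      _ ≤ _ := hk
  · intro a ha
    filter_upwards with k
    exact lt_of_le_of_lt prob_le_one ha
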